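/- For every λ > 0, the modified loss L_λ(D) = E_{x∼P_X}[φ(D(x,m))] + E_{x∼Q_X}[φ(1 − D(x,m))] + λ·E_{(x,y)∼P}[φ(D(x,y))] + λ·E_{(x,y)∼Q}[φ(1 − D(x,y))] equals (1+λ) times the RCGAN loss under the uniform erasure channel with erasure probability 1/(1+λ); that is, L_λ(D) = (1+λ)·(E_{(x,ỹ)∼P̃}[φ(D(x,ỹ))] + E_{(x,ỹ)∼Q̃}[φ(1 − D(x,ỹ))]), where P̃(x,ỹ) = (λ/(1+λ))·P(x,ỹ) for class labels ỹ < m and P̃(x,m) = (1/(1+λ))·P_X(x), and Q̃ is defined from Q in the same way. (Claim of Section 3.1 that the RCGAN(λ) loss is, in expectation, equivalent to the RCGAN loss when a 1/(1+λ) fraction of the labels are missing.) -/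

import Mathlib

open scoped BigOperators
open MeasureTheory

/-- `P` is a probability mass function on `Z`. -/
def IsPMF {Z : Type*} (P : Z → ℝ) : Prop :=
  (∀ z, 0 ≤ P z) ∧ Summable P ∧ ∑' z, P z = 1

/-- The distribution obtained from `P` by erasing each label independently with probability
`1/(1+λ)`: mass `(λ/(1+λ))·P(x,ỹ)` on class labels `ỹ < m` and `(1/(1+λ))·P_X(x)` on the
missing-label symbol `m`. -/
noncomputable def erasedDist {X : Type*} (m : ℕ) (lam : ℝ) (P : X × Fin (m + 1) → ℝ) :
    X × Fin (m + 1) → ℝ :=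
  fun z =>
    if (z.2 : ℕ) < m then (lam / (1 + lam)) * P z
    else (1 / (1 + lam)) * ∑ y, P (z.1, y)

lemma summable_mul_bounded {Z : Type*} [Countable Z] {P : Z → ℝ}
    (hnn : ∀ z, 0 ≤ P z) (hs : Summable P) {f : Z → ℝ} {B : ℝ}
    (hB : ∀ z, |f z| ≤ B) : Summable (fun z => P z * f z) := by
  have : Summable (fun z => |P z * f z|) := by
    apply Summable.of_nonneg_of_le (fun z => abs_nonneg _) (fun z => ?_) (hs.mul_right B)
    rw [abs_mul, abs_of_nonneg (hnn z)]
    exact mul_le_mul_of_nonneg_left (hB z) (hnn z)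
  exact this.of_abs

lemma key_tsum {X : Type*} [Countable X] {m : ℕ}
    (P : X × Fin (m + 1) → ℝ) (hP : IsPMF P)
    (hPz : ∀ x : X, P (x, Fin.last m) = 0)
    (f : X × Fin (m + 1) → ℝ) {B : ℝ} (hB : ∀ z, |f z| ≤ B)
    (lam : ℝ) (hlam : 0 < lam) :
    ∑' z, erasedDist m lam P z * f z
      = (lam / (1 + lam)) * (∑' z, P z * f z)
        + (1 / (1 + lam)) * (∑' x : X, (∑ y, P (x, y)) * f (x, Fin.last m)) := by
  obtain ⟨hnn, hsum, -⟩ := hP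
  set c := lam / (1 + lam)
  set d := (1 : ℝ) / (1 + lam)
  -- marginal
  set g : X → ℝ := fun x => d * ((∑ y, P (x, y)) * f (x, Fin.last m)) with hg
  set i : X → X × Fin (m + 1) := fun x => (x, Fin.last m) with hi
  have hi_inj : Function.Injective i := fun a b h => (Prod.mk.injEq _ _ _ _ ▸ h).1
  set A : X × Fin (m + 1) → ℝ := fun z => c * (P z * f z) with hA
  set Bf : X × Fin (m + 1) → ℝ :=
    fun z => if (z.2 : ℕ) < m then 0 else g z.1 with hBf
  have hlast : ∀ z : X × Fin (m + 1), ¬ ((z.2 : ℕ) < m) → z.2 = Fin.last m := by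
    intro z hz
    have := z.2.isLt
    have : (z.2 : ℕ) = m := by omega
    exact Fin.ext this
  have hsplit : ∀ z, erasedDist m lam P z * f z = A z + Bf z := by
    intro z
    by_cases h : (z.2 : ℕ) < m
    · simp [erasedDist, A, Bf, h, mul_assoc, c]
    · have hz2 := hlast z h
      have hPz' : P z = 0 := by
        have : z = (z.1, Fin.last m) := by rw [← hz2]
        rw [this]; exact hPz z.1
      have hfz : f z = f (z.1, Fin.last m) := by
        congr 1; rw [← hz2]
      simp [erasedDist, A, Bf, h, hPz', g, hfz]
      ring
  -- summability of A
  have hsumA : Summable A :=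
    (summable_mul_bounded hnn hsum hB).mul_left c
  -- marginal summability
  have hPX : Summable (fun x : X => ∑ y, P (x, y)) := by
    have h1 : Summable (fun x : X => ∑' y, P (x, y)) :=
      ((summable_prod_of_nonneg hnn).mp hsum).2
    simpa [tsum_fintype] using h1
  have hPXnn : ∀ x : X, 0 ≤ ∑ y, P (x, y) :=
    fun x => Finset.sum_nonneg fun y _ => hnn _
  have hgs : Summable g := by
    have hB' : ∀ x : X, |f (x, Fin.last m)| ≤ B := fun x => hB _
    exact (summable_mul_bounded hPXnn hPX hB').mul_left d
  -- Bf supported on range i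
  have hBsupp : ∀ z ∉ Set.range i, Bf z = 0 := by
    intro z hz
    by_cases h : (z.2 : ℕ) < m
    · simp [Bf, h]
    · exfalso
      exact hz ⟨z.1, by rw [hi]; exact Prod.ext rfl (hlast z h).symm⟩
  have hBsupp' : Function.support Bf ⊆ Set.range i := by
    intro z hz
    by_contra hc
    exact hz (hBsupp z hc)
  have hBcomp : (Bf ∘ i) = g := by
    funext x
    simp [Bf, i]
  have hsumB : Summable Bf := by
    rw [← hi_inj.summable_iff hBsupp]
    rw [hBcomp]; exact hgs
  have htB : ∑' z, Bf z = ∑' x, g x := by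
    rw [← hi_inj.tsum_eq hBsupp']
    exact tsum_congr fun x => by rw [← hBcomp]; rfl
  calc ∑' z, erasedDist m lam P z * f z
      = ∑' z, (A z + Bf z) := tsum_congr hsplit
    _ = (∑' z, A z) + ∑' z, Bf z := Summable.tsum_add hsumA hsumB
    _ = c * (∑' z, P z * f z) + ∑' x, g x := by
        rw [htB]
        congr 1
        simp only [A]
        exact tsum_mul_left
    _ = c * (∑' z, P z * f z) + d * (∑' x, (∑ y, P (x, y)) * f (x, Fin.last m)) := by
        congr 1
        simp only [g]
        exact tsum_mul_left

theorem modified_loss_eq {X : Type*} [Countable X] {m : ℕ} (hm : 0 < m)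
    (P Q : X × Fin (m + 1) → ℝ) (hP : IsPMF P) (hQ : IsPMF Q)
    (hPz : ∀ x : X, P (x, Fin.last m) = 0) (hQz : ∀ x : X, Q (x, Fin.last m) = 0)
    (φ : ℝ → ℝ) (hφ : ∃ B : ℝ, ∀ t, |φ t| ≤ B)
    (D : X × Fin (m + 1) → ℝ) (lam : ℝ) (hlam : 0 < lam) :
    (∑' x : X, (∑ y, P (x, y)) * φ (D (x, Fin.last m))) +
        (∑' x : X, (∑ y, Q (x, y)) * φ (1 - D (x, Fin.last m))) +
        lam * (∑' z, P z * φ (D z)) + lam * (∑' z, Q z * φ (1 - D z)) =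
      (1 + lam) * ((∑' z, erasedDist m lam P z * φ (D z)) +
        (∑' z, erasedDist m lam Q z * φ (1 - D z))) := by
  obtain ⟨B, hB⟩ := hφ
  rw [key_tsum P hP hPz (fun z => φ (D z)) (fun z => hB _) lam hlam,
      key_tsum Q hQ hQz (fun z => φ (1 - D z)) (fun z => hB _) lam hlam]
  have h1 : (1 : ℝ) + lam ≠ 0 := by positivity
  field_simp
  ring
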